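/- Let C and M be abelian categories with enough injectives, and let R : C ⥤ M be a functor admitting a left adjoint L : M ⥤ C. Assume that R sends injective objects of C to injective objects of M, and that every injective object of M is a retract (direct summand) of R(I) for some injective object I of C. Then the Eilenberg–Moore comparison functor M ⥤ EM(L∘R), to the category of coalgebras over the comonad L∘R on C, is an equivalence of categories. -/

import Mathlib

open CategoryTheory CategoryTheory.Limits


universe w₁ w₂ x₁ x₂

namespace VendoredComonadicity

open CategoryTheory CategoryTheory.Limits CategoryTheory.Comonad

noncomputable section

variable {C : Type x₁} {D : Type x₂}
variable [Category.{w₁} C] [Category.{w₂} D]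
variable {F : C ⥤ D} {G : D ⥤ C} (adj : F ⊣ G)

/-- The "main pair" for a coalgebra `(A, α)` is always a coreflexive pair. -/
instance main_pair_coreflexive (A : adj.toComonad.Coalgebra) :
    IsCoreflexivePair (G.map A.a) (adj.unit.app (G.obj A.A)) := by
  apply IsCoreflexivePair.mk' (G.map (adj.counit.app _)) _ _
  · exact (G.map_comp _ _).symm.trans ((congr_arg G.map A.counit).trans (G.map_id _))
  · rw [adj.right_triangle_components]
    rfl

theorem homEquiv_aux1 {B : C} {X : D} (g : F.obj B ⟶ X) (a : X ⟶ F.obj (G.obj X))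
    (h : g ≫ a = F.map (adj.unit.app B) ≫ F.map (G.map g)) :
    adj.homEquiv _ _ g ≫ G.map a = adj.homEquiv _ _ g ≫ adj.unit.app (G.obj X) := by
  rw [Adjunction.homEquiv_unit, Category.assoc, Category.assoc, ← G.map_comp, h, G.map_comp,
    Adjunction.unit_naturality_assoc]
  erw [Adjunction.unit_naturality]

theorem homEquiv_aux2 {X : D} (a : X ⟶ F.obj (G.obj X)) (B : C) (e : B ⟶ G.obj X)
    (he : e ≫ G.map a = e ≫ adj.unit.app (G.obj X)) :
    F.map (adj.unit.app B) ≫ F.map (G.map ((adj.homEquiv _ _).symm e)) =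
      (adj.homEquiv _ _).symm e ≫ a := by
  apply (adj.homEquiv B (F.obj (G.obj X))).injective
  rw [adj.homEquiv_naturality_right ((adj.homEquiv B X).symm e) a, Equiv.apply_symm_apply, he,
    ← F.map_comp, Adjunction.homEquiv_unit]
  erw [Adjunction.unit_naturality]
  rw [← adj.homEquiv_unit B X, Equiv.apply_symm_apply]

theorem counit_aux3 {X : D} (a : X ⟶ F.obj (G.obj X)) {E : C} (i : E ⟶ G.obj X)
    (h : i ≫ G.map a = i ≫ adj.unit.app (G.obj X)) :
    (F.map (𝟙 E ≫ i) ≫ adj.counit.app X) ≫ a = F.map i := by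
  rw [Category.id_comp, Category.assoc]
  erw [← adj.counit_naturality]
  rw [← F.map_comp_assoc, h, F.map_comp_assoc]
  erw [adj.left_triangle_components]
  rw [Category.comp_id]

/-- The object function for the right adjoint to the comparison functor. -/
def comparisonRightAdjointObj (A : adj.toComonad.Coalgebra)
    [HasEqualizer (G.map A.a) (adj.unit.app _)] : C :=
  equalizer (G.map A.a) (adj.unit.app _)

/-- A bijection of homsets used to construct the right adjoint to the comparison functor. -/
@[simps!]
def comparisonRightAdjointHomEquiv (A : adj.toComonad.Coalgebra) (B : C)
    [HasEqualizer (G.map A.a) (adj.unit.app (G.obj A.A))] :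
    ((comparison adj).obj B ⟶ A) ≃ (B ⟶ comparisonRightAdjointObj adj A) where
      toFun f := by
        refine equalizer.lift (adj.homEquiv _ _ f.f) ?_
        exact homEquiv_aux1 adj f.f A.a f.h.symm
      invFun f := by
        refine ⟨(adj.homEquiv _ _).symm (f ≫ (equalizer.ι _ _)), ?_⟩
        exact homEquiv_aux2 adj A.a B _ (by
          have := equalizer.condition (G.map A.a) (adj.unit.app (G.obj A.A))
          exact (Category.assoc _ _ _).trans ((congrArg (f ≫ ·) this).trans (Category.assoc _ _ _).symm))
      left_inv f := by
        ext
        exact (congrArg (adj.homEquiv B A.A).symm (equalizer.lift_ι _ _)).trans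
          (Equiv.symm_apply_apply _ _)
      right_inv f := by
        apply equalizer.hom_ext
        erw [equalizer.lift_ι, Equiv.apply_symm_apply]
        rfl

/-- Construct the adjunction to the comparison functor. -/
def rightAdjointComparison
    [∀ A : adj.toComonad.Coalgebra, HasEqualizer (G.map A.a)
      (adj.unit.app (G.obj A.A))] :
    adj.toComonad.Coalgebra ⥤ C := by
  refine
    Adjunction.rightAdjointOfEquiv (F := comparison adj)
      (G_obj := fun A => comparisonRightAdjointObj adj A) (fun A B => ?_) ?_
  · apply comparisonRightAdjointHomEquiv
  · intro A B B' g h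
    apply equalizer.hom_ext
    erw [equalizer.lift_ι, Category.assoc, equalizer.lift_ι]
    exact Adjunction.homEquiv_naturality_left _ _ _

/-- Provided we have the appropriate equalizers, we have an adjunction to the comparison
functor. -/
@[simps! counit]
def comparisonAdjunction
    [∀ A : adj.toComonad.Coalgebra, HasEqualizer (G.map A.a)
      (adj.unit.app (G.obj A.A))] :
    comparison adj ⊣ rightAdjointComparison adj :=
  Adjunction.adjunctionOfEquivRight _ _

variable {adj}

/-- This is a fork which is helpful for establishing comonadicity. -/
@[simps! pt]
def counitFork (A : adj.toComonad.Coalgebra)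
    [HasEqualizer (G.map A.a) (adj.unit.app (G.obj A.A))] :
    Fork (F.map (G.map A.a)) (F.map (adj.unit.app (G.obj A.A))) :=
  Fork.ofι (F.map (equalizer.ι (G.map A.a) (adj.unit.app (G.obj A.A))))
    (by
      change _ = F.map _ ≫ _
      rw [← F.map_comp]; erw [equalizer.condition]; exact F.map_comp _ _)

@[simp]
theorem unitFork_ι (A : adj.toComonad.Coalgebra)
    [HasEqualizer (G.map A.a) (adj.unit.app (G.obj A.A))] :
    (counitFork A).ι = F.map (equalizer.ι (G.map A.a) (adj.unit.app (G.obj A.A))) :=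
  rfl

theorem comparisonAdjunction_counit_f
    [∀ A : adj.toComonad.Coalgebra, HasEqualizer (G.map A.a)
      (adj.unit.app (G.obj A.A))]
    (A : adj.toComonad.Coalgebra) :
    ((comparisonAdjunction adj).counit.app A).f = (beckEqualizer A).lift (counitFork A) := by
  apply Fork.IsLimit.hom_ext (beckEqualizer A)
  exact (counit_aux3 adj A.a _ (equalizer.condition (G.map A.a) (adj.unit.app (G.obj A.A)))).trans
    ((beckEqualizer A).fac (counitFork A) WalkingParallelPair.zero).symm

variable (adj)

/-- The fork describing the unit of the adjunction. -/
@[simps!]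
def unitFork (B : C) :
    Fork (G.map (F.map (adj.unit.app B)))
      (adj.unit.app (G.obj (F.obj B))) :=
  Fork.ofι (adj.unit.app B) (adj.unit_naturality _)

variable {adj} in
/-- The counit fork is a limit provided `F` preserves it. -/
def counitLimitOfPreservesEqualizer (A : adj.toComonad.Coalgebra)
    [HasEqualizer (G.map A.a) (adj.unit.app (G.obj A.A))]
    [PreservesLimit (parallelPair (G.map A.a) (adj.unit.app (G.obj A.A))) F] :
    IsLimit (counitFork (G := G) A) :=
  isLimitOfHasEqualizerOfPreservesLimit F _ _

/-- The unit fork is a limit provided `F` coreflects it. -/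
def unitEqualizerOfCoreflectsEqualizer (B : C)
    [ReflectsLimit (parallelPair (G.map (F.map (adj.unit.app B)))
      (adj.unit.app (G.obj (F.obj B)))) F] :
    IsLimit (unitFork (adj := adj) B) :=
  isLimitOfIsLimitForkMap F _ (beckEqualizer ((comparison adj).obj B))

instance
    [∀ A : adj.toComonad.Coalgebra, HasEqualizer (G.map A.a) (adj.unit.app (G.obj A.A))]
    (B : C) : HasLimit (parallelPair
      (G.map (F.map (NatTrans.app adj.unit B)))
      (NatTrans.app adj.unit (G.obj (F.obj B)))) :=
  inferInstanceAs <| HasEqualizer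
    (G.map ((comparison adj).obj B).a)
    (adj.unit.app (G.obj ((comparison adj).obj B).A))

theorem comparisonAdjunction_unit_app
    [∀ A : adj.toComonad.Coalgebra, HasEqualizer (G.map A.a) (adj.unit.app (G.obj A.A))] (B : C) :
    (comparisonAdjunction adj).unit.app B = limit.lift _ (unitFork adj B) := by
  apply equalizer.hom_ext
  refine (equalizer.lift_ι _ _).trans ((adj.homEquiv_unit _ _ _).trans ?_)
  refine Eq.trans ?_ (limit.lift_π (unitFork adj B) WalkingParallelPair.zero).symm
  exact (congrArg (adj.unit.app B ≫ ·) (G.map_id _)).trans (Category.comp_id _)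

section CoreflexiveComonadicity

variable [HasCoreflexiveEqualizers C] [F.ReflectsIsomorphisms]

variable (hpres : ∀ ⦃A B : C⦄ (f g : A ⟶ B) [IsCoreflexivePair f g],
    PreservesLimit (parallelPair f g) F)

include hpres in
/-- Coreflexive (crude) comonadicity theorem, with arbitrary universes. -/
theorem isEquivalence_comparison : (Comonad.comparison adj).IsEquivalence := by
  haveI : ∀ A : adj.toComonad.Coalgebra, HasEqualizer (G.map A.a) (adj.unit.app (G.obj A.A)) :=
    fun A => @HasCoreflexiveEqualizers.has_eq C _ _ _ _ (G.map A.a) _ (main_pair_coreflexive adj A)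
  haveI : ∀ X : adj.toComonad.Coalgebra,
      PreservesLimit (parallelPair (G.map X.a) (NatTrans.app adj.unit (G.obj X.A))) F :=
    fun _ => hpres _ _
  have : ∀ (X : adj.toComonad.Coalgebra), IsIso ((comparisonAdjunction adj).counit.app X) := by
    intro X
    apply
      @isIso_of_reflects_iso _ _ _ _ _ _ _ (Comonad.forget adj.toComonad) ?_ _
    · change IsIso ((comparisonAdjunction adj).counit.app X).f
      rw [comparisonAdjunction_counit_f]
      exact (IsLimit.conePointUniqueUpToIso (beckEqualizer X)
        (counitLimitOfPreservesEqualizer X)).isIso_inv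
  have : ∀ (Y : C), IsIso ((comparisonAdjunction adj).unit.app Y) := by
    intro Y
    rw [comparisonAdjunction_unit_app]
    change IsIso (IsLimit.conePointUniqueUpToIso _ ?_).inv
    infer_instance
    have : IsCoreflexivePair (G.map (F.map (adj.unit.app Y)))
        (adj.unit.app (G.obj (F.obj Y))) := by
      apply IsCoreflexivePair.mk' (G.map (adj.counit.app _)) _ _
      · rw [← G.map_comp, ← G.map_id]
        exact congr_arg G.map (adj.left_triangle_components Y)
      · rw [← G.map_id]
        simp
    apply @unitEqualizerOfCoreflectsEqualizer _ _ _ _ _ _ _ _ ?_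
    apply reflectsLimit_of_reflectsIsomorphisms
  exact (comparisonAdjunction adj).toEquivalence.symm.isEquivalence_inverse

end CoreflexiveComonadicity

end

end VendoredComonadicity

section Aux

variable {A : Type*} [Category A] [Abelian A] [EnoughInjectives A]

/-- Mono test via injectives: if every map to an injective extends along `f`,
then `f` is a monomorphism. -/
lemma mono_of_injective_extension {X Y : A} (f : X ⟶ Y)
    (h : ∀ (I : A), Injective I → ∀ g : X ⟶ I, ∃ k : Y ⟶ I, f ≫ k = g) :
    Mono f := by
  apply Abelian.mono_of_kernel_ι_eq_zero
  set K := kernel f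
  have hmono : Mono (Injective.ι K) := inferInstance
  obtain ⟨k, hk⟩ := h (Injective.under K) inferInstance
    (Injective.factorThru (Injective.ι K) (kernel.ι f))
  have h0 : Injective.ι K = 0 := by
    have := Injective.comp_factorThru (Injective.ι K) (kernel.ι f)
    calc Injective.ι K = kernel.ι f ≫ Injective.factorThru (Injective.ι K) (kernel.ι f) :=
          this.symm
      _ = kernel.ι f ≫ f ≫ k := by rw [hk]
      _ = (kernel.ι f ≫ f) ≫ k := by rw [Category.assoc]
      _ = 0 := by rw [kernel.condition, zero_comp]
  have hid : 𝟙 K = 0 := by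
    have : 𝟙 K ≫ Injective.ι K = 0 ≫ Injective.ι K := by
      rw [Category.id_comp, zero_comp, h0]
    exact (cancel_mono (Injective.ι K)).mp this
  rw [← Category.id_comp (kernel.ι f), hid, zero_comp]

/-- Epi test via injectives: if maps to injectives vanishing on `f` vanish,
then `f` is an epimorphism. -/
lemma epi_of_injective_cancel {X Y : A} (f : X ⟶ Y)
    (h : ∀ (I : A), Injective I → ∀ g : Y ⟶ I, f ≫ g = 0 → g = 0) :
    Epi f := by
  apply Abelian.epi_of_cokernel_π_eq_zero
  set Q := cokernel f
  have h0 : cokernel.π f ≫ Injective.ι Q = 0 := by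
    apply h _ inferInstance
    rw [← Category.assoc, cokernel.condition, zero_comp]
  have : cokernel.π f ≫ Injective.ι Q = 0 ≫ Injective.ι Q := by rw [h0, zero_comp]
  exact (cancel_mono (Injective.ι Q)).mp this

end Aux

/-- Reconstruction: if `L ⊣ R` is an adjunction between abelian categories with
enough injectives such that `R` preserves injectives and every injective of `M`
is a retract of `R I` for an injective `I`, then the Eilenberg–Moore comparison
functor `M ⥤ EM(L ∘ R)` (coalgebras over the comonad `L ∘ R` on `C`) is an
equivalence. -/
theorem comparison_equivalence_of_injective_cogenerator
    {C : Type*} [Category C] [Abelian C] [EnoughInjectives C]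
    {M : Type*} [Category M] [Abelian M] [EnoughInjectives M]
    (L : M ⥤ C) (R : C ⥤ M) (adj : L ⊣ R)
    (hR : ∀ I : C, Injective I → Injective (R.obj I))
    (hcog : ∀ J : M, Injective J → ∃ I : C, Injective I ∧
      ∃ (i : J ⟶ R.obj I) (r : R.obj I ⟶ J), i ≫ r = 𝟙 J) :
    (Comonad.comparison adj).IsEquivalence := by
  haveI : L.IsLeftAdjoint := ⟨R, ⟨adj⟩⟩
  haveI hpc : PreservesColimitsOfSize.{0, 0} L := adj.leftAdjoint_preservesColimits
  haveI : L.PreservesZeroMorphisms := inferInstance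
  haveI : R.IsRightAdjoint := ⟨L, ⟨adj⟩⟩
  haveI : R.PreservesZeroMorphisms := inferInstance
  -- L preserves monomorphisms, by the injective test in C.
  haveI hLm : L.PreservesMonomorphisms := by
    constructor
    intro E A f hf
    apply mono_of_injective_extension
    intro I hI g
    haveI : Injective (R.obj I) := hR I hI
    refine ⟨(adj.homEquiv A I).symm (Injective.factorThru (adj.homEquiv E I g) f), ?_⟩
    rw [← Adjunction.homEquiv_naturality_left_symm, Injective.comp_factorThru,
      Equiv.symm_apply_apply]
  -- L preserves finite limits (it is exact).
  haveI : L.PreservesHomology := by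
    haveI : ∀ {X Y : M} (f : X ⟶ Y), PreservesColimit (parallelPair f 0) L :=
      fun f => inferInstance
    exact Functor.preservesHomology_of_preservesMonos_and_cokernels L
  haveI : PreservesBinaryBiproducts L := preservesBinaryBiproducts_of_preservesBinaryCoproducts L
  haveI : L.Additive := Functor.additive_of_preservesBinaryBiproducts L
  haveI hfl : PreservesFiniteLimits L := L.preservesFiniteLimits_of_preservesHomology
  -- L reflects isomorphisms.
  haveI : L.ReflectsIsomorphisms := by
    constructor
    intro X Y f hiso
    have hmono : Mono f := by
      apply mono_of_injective_extension
      intro J hJ g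
      obtain ⟨I, hI, i, r, hir⟩ := hcog J hJ
      refine ⟨adj.homEquiv Y I (inv (L.map f) ≫ (adj.homEquiv X I).symm (g ≫ i)) ≫ r, ?_⟩
      have : f ≫ adj.homEquiv Y I (inv (L.map f) ≫ (adj.homEquiv X I).symm (g ≫ i))
          = g ≫ i := by
        rw [← Adjunction.homEquiv_naturality_left, IsIso.hom_inv_id_assoc,
          Equiv.apply_symm_apply]
      rw [← Category.assoc, this, Category.assoc, hir, Category.comp_id]
    have hepi : Epi f := by
      apply epi_of_injective_cancel
      intro J hJ g hg
      obtain ⟨I, hI, i, r, hir⟩ := hcog J hJ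
      have ht : L.map f ≫ (adj.homEquiv Y I).symm (g ≫ i) = 0 := by
        rw [← Adjunction.homEquiv_naturality_left_symm, ← Category.assoc, hg, zero_comp,
          Adjunction.homEquiv_counit, L.map_zero, zero_comp]
      have ht0 : (adj.homEquiv Y I).symm (g ≫ i) = 0 := by
        calc (adj.homEquiv Y I).symm (g ≫ i)
            = inv (L.map f) ≫ (L.map f ≫ (adj.homEquiv Y I).symm (g ≫ i)) := by
              rw [IsIso.inv_hom_id_assoc]
          _ = 0 := by rw [ht, comp_zero]
      have hgi : g ≫ i = 0 := by
        have := congrArg (adj.homEquiv Y I) ht0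
        rw [Equiv.apply_symm_apply] at this
        rw [this, Adjunction.homEquiv_unit, R.map_zero, comp_zero]
      calc g = g ≫ i ≫ r := by rw [hir, Category.comp_id]
        _ = (g ≫ i) ≫ r := by rw [Category.assoc]
        _ = 0 := by rw [hgi, zero_comp]
    exact isIso_of_mono_of_epi f
  -- L preserves coreflexive equalizers, since it preserves all finite limits.
  haveI : HasCoreflexiveEqualizers M := inferInstance
  exact VendoredComonadicity.isEquivalence_comparison adj (fun A B f g _ => inferInstance)
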